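/- arXiv:1303.6873 — 4 statements merged into one kernel-verified Lean document; each statement's English description precedes it below -/
import Mathlib

section
/- Let $(f_{i,j})_{i,j\in\mathbb{N}}$ be a doubly-indexed family of nonnegative functions on $[0,\infty)$. Set $f_i = \sum_j f_{i,j}$ and $f = \sum_i f_i$. Suppose that for every $i,j$ the function $f_{i,j}$ converges at infinity to a limit $l_{i,j}$, and that $f$ converges at infinity to $l = \sum_{i,j} l_{i,j}$. Then for every $i$, the function $f_i$ converges at infinity and its limit is $l_i = \sum_j l_{i,j}$. -/
open Filter Topology ENNReal

private lemma aux_ev_ge {α : Type*} {F : Filter α} {u : α → ℝ≥0∞} {v ε : ℝ≥0∞}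
    (hε : ε ≠ 0) (hv : v ≠ ∞) (h : Tendsto u F (𝓝 v)) :
    ∀ᶠ x in F, v - ε ≤ u x := by
  rcases le_total v ε with h' | h'
  · exact Eventually.of_forall fun _ => by simp [tsub_eq_zero_of_le h']
  · have hv0 : v ≠ 0 := fun h0 => hε (le_antisymm (h0 ▸ h') zero_le)
    have hlt : v - ε < v := ENNReal.sub_lt_self hv hv0 hε
    exact (h.eventually (Ioi_mem_nhds hlt)).mono fun x hx => hx.le

private lemma aux_ev_le {α : Type*} {F : Filter α} {u : α → ℝ≥0∞} {v ε : ℝ≥0∞}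
    (hε : ε ≠ 0) (hv : v ≠ ∞) (h : Tendsto u F (𝓝 v)) :
    ∀ᶠ x in F, u x ≤ v + ε := by
  have hlt : v < v + ε := ENNReal.lt_add_right hv hε
  exact (h.eventually (Iio_mem_nhds hlt)).mono fun x hx => hx.le

private lemma aux_key {li R c q : ℝ≥0∞} : li + R + q ≤ li + (c + q) + (R - c) := by
  rcases le_total c R with h | h
  · have h1 : R - c + c = R := tsub_add_cancel_of_le h
    conv_lhs => rw [← h1]
    have : li + (R - c + c) + q = li + (c + q) + (R - c) := by ring
    rw [this]
  · have h1 : R - c = 0 := tsub_eq_zero_of_le h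
    rw [h1, add_zero]
    have : li + R + q ≤ li + c + q := by gcongr
    simpa [add_assoc] using this

set_option maxHeartbeats 1000000 in
/-- Lemma 4.3 of the paper: if each `f i j` converges at infinity to `l i j`
(all finite), and the total sum `f = ∑ i, ∑ j, f i j` converges to the
(finite) total sum `l = ∑ i, ∑ j, l i j`, then each partial sum
`f i = ∑ j, f i j` converges to `l i = ∑ j, l i j`. -/
theorem stmt0 (f : ℕ → ℕ → ℝ → ℝ≥0∞) (l : ℕ → ℕ → ℝ≥0∞)
    (hlim : ∀ i j, Tendsto (f i j) atTop (𝓝 (l i j)))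
    (hlfin : ∀ i j, l i j ≠ ∞)
    (hsumfin : (∑' (i : ℕ) (j : ℕ), l i j) ≠ ∞)
    (hglobal : Tendsto (fun t => ∑' (i : ℕ) (j : ℕ), f i j t) atTop
      (𝓝 (∑' (i : ℕ) (j : ℕ), l i j))) :
    ∀ i, Tendsto (fun t => ∑' (j : ℕ), f i j t) atTop (𝓝 (∑' (j : ℕ), l i j)) := by
  intro i
  set L : ℝ≥0∞ := ∑' (i : ℕ) (j : ℕ), l i j with hLdef
  set li : ℝ≥0∞ := ∑' (j : ℕ), l i j with hlidef
  have hli_le : li ≤ L := ENNReal.le_tsum i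
  have hlifin : li ≠ ∞ := (lt_of_le_of_lt hli_le (lt_top_iff_ne_top.2 hsumfin)).ne
  set R : ℝ≥0∞ := ∑' (k : ℕ), if k = i then 0 else ∑' (j : ℕ), l k j with hRdef
  have hsplitL : L = li + R := ENNReal.summable.tsum_eq_add_tsum_ite' i
  have hRfin : R ≠ ∞ := by
    intro h
    rw [hsplitL, h, add_top] at hsumfin
    exact hsumfin rfl
  rw [ENNReal.tendsto_nhds hlifin]
  intro ε hε
  rcases eq_or_ne ε ∞ with rfl | hεtop
  · refine Eventually.of_forall fun t => ?_
    constructor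
    · simp
    · simp
  have hε0 : ε ≠ 0 := hε.ne'
  set q : ℝ≥0∞ := ε / 2 / 2 with hqdef
  have hq0 : q ≠ 0 := by
    simp [hqdef, ENNReal.div_eq_zero_iff, hε0]
  have hqq : q + q = ε / 2 := ENNReal.add_halves _
  have hhh : ε / 2 + ε / 2 = ε := ENNReal.add_halves _
  -- lower bound eventuality
  obtain ⟨s, hs⟩ : ∃ s : Finset ℕ, li - ε / 2 ≤ ∑ j ∈ s, l i j := by
    have h2 : (ε / 2 : ℝ≥0∞) ≠ 0 := by simp [ENNReal.div_eq_zero_iff, hε0]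
    exact (aux_ev_ge h2 hlifin ENNReal.summable.hasSum).exists
  have hsfin : (∑ j ∈ s, l i j) ≠ ∞ :=
    (lt_of_le_of_lt (ENNReal.sum_le_tsum s) (lt_top_iff_ne_top.2 hlifin)).ne
  have htends1 : Tendsto (fun t => ∑ j ∈ s, f i j t) atTop (𝓝 (∑ j ∈ s, l i j)) :=
    tendsto_finset_sum _ fun j _ => hlim i j
  have hev1 : ∀ᶠ t in atTop, li - ε ≤ ∑' (j : ℕ), f i j t := by
    have h2 : (ε / 2 : ℝ≥0∞) ≠ 0 := by simp [ENNReal.div_eq_zero_iff, hε0]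
    filter_upwards [aux_ev_ge h2 hsfin htends1] with t ht
    calc li - ε = li - (ε / 2 + ε / 2) := by rw [hhh]
    _ = (li - ε / 2) - ε / 2 := by rw [tsub_tsub]
    _ ≤ (∑ j ∈ s, l i j) - ε / 2 := tsub_le_tsub_right hs _
    _ ≤ ∑ j ∈ s, f i j t := ht
    _ ≤ ∑' (j : ℕ), f i j t := ENNReal.sum_le_tsum s
  -- upper bound eventuality
  obtain ⟨s2, hs2⟩ : ∃ s2 : Finset ℕ,
      R - q ≤ ∑ k ∈ s2, if k = i then 0 else ∑' (j : ℕ), l k j :=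
    (aux_ev_ge hq0 hRfin ENNReal.summable.hasSum).exists
  have htendsT : Tendsto (fun s3 : Finset ℕ => ∑ k ∈ s2, if k = i then 0 else ∑ j ∈ s3, l k j)
      atTop (𝓝 (∑ k ∈ s2, if k = i then 0 else ∑' (j : ℕ), l k j)) := by
    refine tendsto_finset_sum _ fun k _ => ?_
    by_cases hk : k = i
    · simp [hk]
    · simp only [hk, if_false, ↓reduceIte]; exact (ENNReal.summable (f := l k)).hasSum
  have hs2fin : (∑ k ∈ s2, if k = i then 0 else ∑' (j : ℕ), l k j) ≠ ∞ :=
    (lt_of_le_of_lt (ENNReal.sum_le_tsum s2) (lt_top_iff_ne_top.2 hRfin)).ne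
  obtain ⟨s3, hs3⟩ : ∃ s3 : Finset ℕ,
      (∑ k ∈ s2, if k = i then 0 else ∑' (j : ℕ), l k j) - q ≤
        ∑ k ∈ s2, if k = i then 0 else ∑ j ∈ s3, l k j :=
    (aux_ev_ge hq0 hs2fin htendsT).exists
  set A : ℝ≥0∞ := ∑ k ∈ s2, if k = i then 0 else ∑ j ∈ s3, l k j with hAdef
  have hA : R - ε / 2 ≤ A := by
    calc R - ε / 2 = R - (q + q) := by rw [hqq]
    _ = (R - q) - q := by rw [tsub_tsub]
    _ ≤ (∑ k ∈ s2, if k = i then 0 else ∑' (j : ℕ), l k j) - q := tsub_le_tsub_right hs2 _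
    _ ≤ A := hs3
  have hAfin : A ≠ ∞ := by
    have hA_le : A ≤ ∑ k ∈ s2, if k = i then 0 else ∑' (j : ℕ), l k j := by
      refine Finset.sum_le_sum fun k _ => ?_
      by_cases hk : k = i
      · simp [hk]
      · simpa [hk] using ENNReal.sum_le_tsum (f := l k) s3
    exact (lt_of_le_of_lt hA_le (lt_top_iff_ne_top.2 hs2fin)).ne
  have htendsA : Tendsto (fun t => ∑ k ∈ s2, if k = i then 0 else ∑ j ∈ s3, f k j t)
      atTop (𝓝 A) := by
    refine tendsto_finset_sum _ fun k _ => ?_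
    by_cases hk : k = i
    · simp [hk]
    · simpa [hk] using tendsto_finset_sum s3 fun j _ => hlim k j
  set c : ℝ≥0∞ := ε / 2 + q with hcdef
  have hcε : c + q = ε := by rw [hcdef, add_assoc, hqq, hhh]
  have hRcfin : R - c ≠ ∞ := (lt_of_le_of_lt tsub_le_self (lt_top_iff_ne_top.2 hRfin)).ne
  have hev2 : ∀ᶠ t in atTop, (∑' (j : ℕ), f i j t) ≤ li + ε := by
    filter_upwards [aux_ev_ge hq0 hAfin htendsA, aux_ev_le hq0 hsumfin hglobal] with t hA' hF
    -- rest t ≥ R - c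
    have hrest : R - c ≤ ∑' (k : ℕ), if k = i then 0 else ∑' (j : ℕ), f k j t := by
      calc R - c = R - (ε / 2 + q) := rfl
      _ = (R - ε / 2) - q := by rw [tsub_tsub]
      _ ≤ A - q := tsub_le_tsub_right hA _
      _ ≤ ∑ k ∈ s2, if k = i then 0 else ∑ j ∈ s3, f k j t := hA'
      _ ≤ ∑ k ∈ s2, if k = i then 0 else ∑' (j : ℕ), f k j t := by
          refine Finset.sum_le_sum fun k _ => ?_
          by_cases hk : k = i
          · simp [hk]
          · simpa [hk] using ENNReal.sum_le_tsum (f := fun j => f k j t) s3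
      _ ≤ _ := ENNReal.sum_le_tsum s2
    have hsplitF : (∑' (k : ℕ) (j : ℕ), f k j t) =
        (∑' (j : ℕ), f i j t) + ∑' (k : ℕ), if k = i then 0 else ∑' (j : ℕ), f k j t :=
      ENNReal.summable.tsum_eq_add_tsum_ite' i
    have hchain : (∑' (j : ℕ), f i j t) + (R - c) ≤ (li + ε) + (R - c) := by
      calc (∑' (j : ℕ), f i j t) + (R - c)
          ≤ (∑' (j : ℕ), f i j t) + ∑' (k : ℕ), if k = i then 0 else ∑' (j : ℕ), f k j t :=
            add_le_add_right hrest _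
      _ = ∑' (k : ℕ) (j : ℕ), f k j t := hsplitF.symm
      _ ≤ L + q := hF
      _ = li + R + q := by rw [hsplitL]
      _ ≤ li + (c + q) + (R - c) := aux_key
      _ = (li + ε) + (R - c) := by rw [hcε]
    exact (ENNReal.add_le_add_iff_right hRcfin).1 hchain
  filter_upwards [hev1, hev2] with t h1 h2
  exact ⟨h1, h2⟩
end

section
/- A metric space $(T,d)$ is an $\mathbb{R}$-tree if and only if it is connected and satisfies the four-point condition: for all $x,y,u,v \in T$, $d(x,y)+d(u,v) \le \max(d(x,u)+d(y,v),\, d(x,v)+d(y,u))$. -/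
/-- `φ` is a distance-preserving parametrization of a segment from `x` to `y`. -/
def IsSegmentMap {T : Type*} [MetricSpace T] (x y : T)
    (φ : Set.Icc (0 : ℝ) (dist x y) → T) : Prop :=
  (∀ a b, dist (φ a) (φ b) = |a.1 - b.1|) ∧
    φ ⟨0, Set.mem_Icc.mpr ⟨le_rfl, dist_nonneg⟩⟩ = x ∧
    φ ⟨dist x y, Set.mem_Icc.mpr ⟨dist_nonneg, le_rfl⟩⟩ = y

/-- A metric space is an `ℝ`-tree: any two points are joined by a unique isometric
segment, and any continuous injective path has the segment as its image. -/
def IsRTree (T : Type*) [MetricSpace T] : Prop :=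
  (∀ x y : T, ∃! φ : Set.Icc (0 : ℝ) (dist x y) → T, IsSegmentMap x y φ) ∧
  (∀ c : Set.Icc (0 : ℝ) 1 → T, Continuous c → Function.Injective c →
    ∀ φ, IsSegmentMap (c ⟨0, Set.mem_Icc.mpr ⟨le_rfl, zero_le_one⟩⟩)
        (c ⟨1, Set.mem_Icc.mpr ⟨zero_le_one, le_rfl⟩⟩) φ →
      Set.range c = Set.range φ)


section RTreeAux

variable {T : Type*} [MetricSpace T]

/-- Gromov product. -/
noncomputable def gp (w a b : T) : ℝ := (dist w a + dist w b - dist a b) / 2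

lemma gromov_of_fourpt
    (H : ∀ x y u v : T, dist x y + dist u v ≤
      max (dist x u + dist y v) (dist x v + dist y u))
    (w a b c : T) : min (gp w a c) (gp w c b) ≤ gp w a b := by
  have h4 := H a b c w
  have c1 : dist b w = dist w b := dist_comm _ _
  have c2 : dist a w = dist w a := dist_comm _ _
  have c3 : dist c w = dist w c := dist_comm _ _
  have c4 : dist b c = dist c b := dist_comm _ _
  rcases le_max_iff.mp h4 with h | h
  · exact le_trans (min_le_left _ _) (by unfold gp; linarith)
  · exact le_trans (min_le_right _ _) (by unfold gp; linarith)

/-- `p` lies between `x` and `y` at distance `t` from `x`. -/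
def RBtw (x y : T) (t : ℝ) (p : T) : Prop :=
  dist x p = t ∧ dist p y = dist x y - t

lemma btw_unique
    (H : ∀ x y u v : T, dist x y + dist u v ≤
      max (dist x u + dist y v) (dist x v + dist y u))
    {x y : T} {t : ℝ} {p q : T} (hp : RBtw x y t p) (hq : RBtw x y t q) : p = q := by
  have h4 := H x y p q
  have c1 : dist y p = dist p y := dist_comm _ _
  have c2 : dist y q = dist q y := dist_comm _ _
  have hpq : dist p q ≤ 0 := by
    rcases le_max_iff.mp h4 with h | h
    · have := hq.2; have := hp.1; linarith [hp.2, hq.1]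
    · have := hp.2; have := hq.1; linarith [hq.2, hp.1]
  exact dist_le_zero.mp hpq

lemma exists_btw [PreconnectedSpace T]
    (H : ∀ x y u v : T, dist x y + dist u v ≤
      max (dist x u + dist y v) (dist x v + dist y u))
    (x y : T) {t : ℝ} (h0 : 0 ≤ t) (hd : t ≤ dist x y) : ∃ p, RBtw x y t p := by
  by_contra hno
  push_neg at hno
  set d := dist x y with hdd
  -- x is between at 0, y is between at d
  have hx0 : RBtw x y 0 x := ⟨dist_self x, by simp [d]⟩
  have hyd : RBtw x y d y := ⟨rfl, by simp [d]⟩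
  have ht0 : 0 < t := by
    rcases lt_or_eq_of_le h0 with h | h
    · exact h
    · exact absurd (h ▸ hx0) (hno x)
  have htd : t < d := by
    rcases lt_or_eq_of_le hd with h | h
    · exact h
    · exact absurd (h ▸ hyd) (hno y)
  set α : T → ℝ := fun p => (dist x p + d - dist p y) / 2 with hα
  have hαcont : Continuous α := by fun_prop
  -- each point of {α = t} is at distance > t from x, and a ball around it stays in {α = t}
  have key : ∀ p, α p = t → ∀ q, dist p q < dist x p - t → α q = t := by
    intro p hpt q hq
    have hδpos : 0 < dist x p - t := lt_of_le_of_lt dist_nonneg hq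
    have hpy : dist p y = dist x p + d - 2 * t := by
      have : (dist x p + d - dist p y) / 2 = t := hpt
      linarith
    -- lower bound : α q ≥ t
    have g1 := gromov_of_fourpt H x q y p
    have g2 := gromov_of_fourpt H y q x p
    have e1 : gp x p y = t := by
      unfold gp; linarith [hpy, hdd]
    have e2 : gp x q p ≥ dist x p - dist p q := by
      unfold gp
      have := abs_dist_sub_le q p x
      have h1 : dist x q ≥ dist x p - dist p q := by
        have := dist_triangle x q p  -- d x p ≤ d x q + d q p
        have hc : dist q p = dist p q := dist_comm _ _
        linarith [dist_triangle x q p]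
      have hc : dist q p = dist p q := dist_comm _ _
      linarith
    have hge : t ≤ α q := by
      have hmin : t ≤ min (gp x q p) (gp x p y) := by
        refine le_min ?_ (le_of_eq e1.symm)
        linarith
      have h5 : t ≤ gp x q y := le_trans hmin g1
      unfold gp at h5
      rw [hα]; simp only
      linarith [h5, hdd]
    -- upper bound : α q ≤ t
    have e3 : gp y p x = d - t := by
      unfold gp
      rw [dist_comm y p, dist_comm y x, dist_comm p x]
      linarith
    have e4 : gp y q p ≥ d - t + (dist x p - t - dist p q) := by
      unfold gp
      have h1 : dist y q ≥ dist y p - dist q p := by linarith [dist_triangle y q p]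
      have hc1 : dist y p = dist p y := dist_comm _ _
      have hc2 : dist q p = dist p q := dist_comm _ _
      linarith
    have hle : α q ≤ t := by
      have hmin : d - t ≤ min (gp y q p) (gp y p x) := le_min (by linarith) (le_of_eq e3.symm)
      have h5 : d - t ≤ gp y q x := le_trans hmin g2
      unfold gp at h5
      have hc1 : dist y q = dist q y := dist_comm _ _
      have hc2 : dist q x = dist x q := dist_comm _ _
      have hc3 : dist y x = dist x y := dist_comm _ _
      rw [hα]; simp only
      linarith [h5, hdd]
    linarith
  -- clopen argument
  have hU : IsOpen {p : T | α p < t} := isOpen_lt hαcont continuous_const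
  have hV1 : IsOpen {p : T | t < α p} := isOpen_lt continuous_const hαcont
  have hV2 : IsOpen {p : T | α p = t} := by
    rw [Metric.isOpen_iff]
    intro p hp
    have hδpos : 0 < dist x p - t := by
      rcases lt_or_eq_of_le (show t ≤ dist x p by
        have hαp : α p = t := hp
        have h1 := dist_triangle x p y
        rw [hα] at hαp; simp only at hαp
        linarith [hdd]) with h | h
      · linarith
      · exfalso
        apply hno p
        have hαp : α p = t := hp
        rw [hα] at hαp; simp only at hαp
        exact ⟨h.symm, by linarith⟩
    exact ⟨dist x p - t, hδpos, fun q hq => key p hp q (by rw [Metric.mem_ball, dist_comm] at hq; exact hq)⟩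
  have hcover : (Set.univ : Set T) ⊆ {p : T | α p < t} ∪ ({p : T | t < α p} ∪ {p : T | α p = t}) := by
    intro p _
    rcases lt_trichotomy (α p) t with h | h | h
    · exact Or.inl h
    · exact Or.inr (Or.inr h)
    · exact Or.inr (Or.inl h)
  have hxU : x ∈ {p : T | α p < t} := by
    show α x < t
    rw [hα]; simp only [dist_self]
    linarith [hdd]
  have hyV : y ∈ {p : T | t < α p} ∪ {p : T | α p = t} := by
    left
    show t < α y
    rw [hα]; simp only [dist_self]
    linarith [hdd]
  have hpre := PreconnectedSpace.isPreconnected_univ (α := T)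
  obtain ⟨z, -, hz1, hz2⟩ := hpre _ _ hU (hV1.union hV2) hcover
    ⟨x, Set.mem_univ x, hxU⟩ ⟨y, Set.mem_univ y, hyV⟩
  rcases hz2 with h | h
  · exact absurd hz1 (by simp only [Set.mem_setOf_eq] at *; linarith)
  · exact absurd hz1 (by simp only [Set.mem_setOf_eq] at *; linarith)


lemma RBtw_of_segmentMap {x y : T} {φ : Set.Icc (0:ℝ) (dist x y) → T}
    (hφ : IsSegmentMap x y φ) (t : Set.Icc (0:ℝ) (dist x y)) :
    RBtw x y t.1 (φ t) := by
  obtain ⟨hd, h0, h1⟩ := hφ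
  constructor
  · have h := hd ⟨0, Set.mem_Icc.mpr ⟨le_rfl, dist_nonneg⟩⟩ t
    rw [h0] at h
    rw [h]
    simp only
    rw [abs_of_nonpos (by linarith [t.2.1])]
    ring
  · have h := hd t ⟨dist x y, Set.mem_Icc.mpr ⟨dist_nonneg, le_rfl⟩⟩
    rw [h1] at h
    rw [h]
    simp only
    rw [abs_of_nonpos (by linarith [t.2.2])]
    ring

lemma exists_segmentMap [PreconnectedSpace T]
    (H : ∀ x y u v : T, dist x y + dist u v ≤
      max (dist x u + dist y v) (dist x v + dist y u))
    (x y : T) : ∃ φ : Set.Icc (0:ℝ) (dist x y) → T, IsSegmentMap x y φ := by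
  have hex : ∀ t : Set.Icc (0:ℝ) (dist x y), ∃ p, RBtw x y t.1 p :=
    fun t => exists_btw H x y t.2.1 t.2.2
  choose φ hφ using hex
  refine ⟨φ, fun a b => ?_, ?_, ?_⟩
  · have ha := hφ a; have hb := hφ b
    have hlow : |a.1 - b.1| ≤ dist (φ a) (φ b) := by
      have h := abs_dist_sub_le (φ a) (φ b) x
      rw [dist_comm (φ a) x, dist_comm (φ b) x, ha.1, hb.1] at h
      exact h
    have hup : dist (φ a) (φ b) ≤ |a.1 - b.1| := by
      have h4 := H x y (φ a) (φ b)
      have c1 : dist y (φ a) = dist (φ a) y := dist_comm _ _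
      have c2 : dist y (φ b) = dist (φ b) y := dist_comm _ _
      rcases le_max_iff.mp h4 with h | h <;>
        rcases abs_cases (a.1 - b.1) with ⟨he, _⟩ | ⟨he, _⟩ <;>
        linarith [ha.1, ha.2, hb.1, hb.2]
    linarith
  · exact btw_unique H (hφ _) ⟨dist_self x, by simp⟩
  · exact btw_unique H (hφ _) ⟨rfl, by simp⟩

lemma segmentMap_unique
    (H : ∀ x y u v : T, dist x y + dist u v ≤
      max (dist x u + dist y v) (dist x v + dist y u))
    {x y : T} {φ ψ : Set.Icc (0:ℝ) (dist x y) → T}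
    (hφ : IsSegmentMap x y φ) (hψ : IsSegmentMap x y ψ) : φ = ψ :=
  funext fun t => btw_unique H (RBtw_of_segmentMap hφ t) (RBtw_of_segmentMap hψ t)

/-- `p` and `q` are in the same branch at `m`. -/
def Same (m p q : T) : Prop := dist p q < dist p m + dist m q

lemma same_symm {m p q : T} (h : Same m p q) : Same m q p := by
  unfold Same at *
  have c1 : dist q p = dist p q := dist_comm _ _
  have c2 : dist q m = dist m q := dist_comm _ _
  have c3 : dist m p = dist p m := dist_comm _ _
  linarith

lemma same_refl {m p : T} (h : p ≠ m) : Same m p p := by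
  unfold Same
  rw [dist_self]
  have h1 : 0 < dist p m := dist_pos.mpr h
  have c : dist m p = dist p m := dist_comm _ _
  linarith

lemma same_trans
    (H : ∀ x y u v : T, dist x y + dist u v ≤
      max (dist x u + dist y v) (dist x v + dist y u))
    {m p q r : T} (h1 : Same m p q) (h2 : Same m q r) : Same m p r := by
  have h4 := H p r q m
  unfold Same at *
  have c1 : dist m q = dist q m := dist_comm _ _
  have c2 : dist r m = dist m r := dist_comm _ _
  have c3 : dist r q = dist q r := dist_comm _ _
  rcases le_max_iff.mp h4 with h | h <;> linarith

lemma path_hits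
    (H : ∀ x y u v : T, dist x y + dist u v ≤
      max (dist x u + dist y v) (dist x v + dist y u))
    {γ : ℝ → T} (hγ : Continuous γ) {s₁ s₂ : ℝ} (hs : s₁ ≤ s₂) (m : T)
    (h1 : γ s₁ ≠ m) (h2 : γ s₂ ≠ m) (hnb : ¬ Same m (γ s₁) (γ s₂)) :
    ∃ s, s ∈ Set.Icc s₁ s₂ ∧ γ s = m := by
  by_contra hno
  push_neg at hno
  set a := γ s₁ with ha
  have hU : IsOpen {q : T | Same m a q} := by
    have he : {q : T | Same m a q} = {q : T | dist a q < dist a m + dist m q} := rfl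
    rw [he]
    exact isOpen_lt (by fun_prop) (by fun_prop)
  have hV : IsOpen {q : T | q ≠ m ∧ ¬ Same m a q} := by
    rw [Metric.isOpen_iff]
    rintro q ⟨hqm, hq⟩
    refine ⟨dist q m, dist_pos.mpr hqm, fun q' hq' => ?_⟩
    rw [Metric.mem_ball] at hq'
    have hq'm : q' ≠ m := by
      intro hbad
      rw [hbad] at hq'
      rw [dist_comm m q] at hq'
      exact absurd hq' (lt_irrefl _)
    refine ⟨hq'm, fun hbad => ?_⟩
    have hq'q : Same m q' q := by
      unfold Same
      have c1 : dist m q = dist q m := dist_comm _ _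
      have c2 : 0 ≤ dist q' m := dist_nonneg
      linarith
    exact hq (same_trans H hbad hq'q)
  obtain ⟨s, hsI, hsu, hsv⟩ := (isPreconnected_Icc (a := s₁) (b := s₂))
    (γ ⁻¹' {q | Same m a q}) (γ ⁻¹' {q | q ≠ m ∧ ¬ Same m a q})
    (hU.preimage hγ) (hV.preimage hγ)
    (fun s hsI => by
      by_cases hsame : Same m a (γ s)
      · exact Or.inl hsame
      · exact Or.inr ⟨hno s hsI, hsame⟩)
    ⟨s₁, ⟨le_rfl, hs⟩, same_refl h1⟩
    ⟨s₂, ⟨hs, le_rfl⟩, h2, hnb⟩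
  exact hsv.2 hsu


lemma axiom2_of_fourpt [PreconnectedSpace T]
    (H : ∀ x y u v : T, dist x y + dist u v ≤
      max (dist x u + dist y v) (dist x v + dist y u))
    (c : Set.Icc (0:ℝ) 1 → T) (hc : Continuous c) (hinj : Function.Injective c)
    (φ : Set.Icc (0:ℝ)
      (dist (c ⟨0, Set.mem_Icc.mpr ⟨le_rfl, zero_le_one⟩⟩)
            (c ⟨1, Set.mem_Icc.mpr ⟨zero_le_one, le_rfl⟩⟩)) → T)
    (hφ : IsSegmentMap (c ⟨0, Set.mem_Icc.mpr ⟨le_rfl, zero_le_one⟩⟩)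
            (c ⟨1, Set.mem_Icc.mpr ⟨zero_le_one, le_rfl⟩⟩) φ) :
    Set.range c = Set.range φ := by
  revert φ hφ
  generalize hA : c ⟨0, Set.mem_Icc.mpr ⟨le_rfl, zero_le_one⟩⟩ = a
  generalize hB : c ⟨1, Set.mem_Icc.mpr ⟨zero_le_one, le_rfl⟩⟩ = b
  intro φ hφ
  have hab : a ≠ b := by
    intro h
    have h2 : (⟨0, Set.mem_Icc.mpr ⟨le_rfl, zero_le_one⟩⟩ : Set.Icc (0:ℝ) 1) =
        ⟨1, Set.mem_Icc.mpr ⟨zero_le_one, le_rfl⟩⟩ := hinj (by rw [hA, hB, h])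
    exact zero_ne_one (congrArg Subtype.val h2)
  have hd0 : 0 < dist a b := dist_pos.mpr hab
  set γ : ℝ → T := fun s => c (Set.projIcc 0 1 zero_le_one s) with hγγ
  have hγ : Continuous γ := hc.comp continuous_projIcc
  have hγs : ∀ (s : ℝ) (hs : s ∈ Set.Icc (0:ℝ) 1), γ s = c ⟨s, hs⟩ := by
    intro s hs
    rw [hγγ]
    simp only
    rw [Set.projIcc_of_mem]
  have hγ0 : γ 0 = a := by rw [hγs 0 ⟨le_rfl, zero_le_one⟩]; exact hA
  have hγ1 : γ 1 = b := by rw [hγs 1 ⟨zero_le_one, le_rfl⟩]; exact hB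
  have hbtw := RBtw_of_segmentMap hφ
  apply Set.Subset.antisymm
  · -- range c ⊆ range φ
    rintro _ ⟨s₀, rfl⟩
    set p := c s₀ with hpp
    set α : ℝ := (dist a p + dist a b - dist p b) / 2 with hαα
    have hα0 : 0 ≤ α := by
      have h1 := dist_triangle p a b
      have c1 : dist p a = dist a p := dist_comm _ _
      rw [hαα]; linarith
    have hαd : α ≤ dist a b := by
      have h1 := dist_triangle a b p
      have c1 : dist b p = dist p b := dist_comm _ _
      rw [hαα]; linarith
    set m := φ ⟨α, Set.mem_Icc.mpr ⟨hα0, hαd⟩⟩ with hmm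
    have ham : dist a m = α := (hbtw ⟨α, Set.mem_Icc.mpr ⟨hα0, hαd⟩⟩).1
    have hmb : dist m b = dist a b - α := (hbtw ⟨α, Set.mem_Icc.mpr ⟨hα0, hαd⟩⟩).2
    have hpb : dist p b = dist a p + dist a b - 2 * α := by rw [hαα]; ring
    have hpm : dist p m = dist a p - α := by
      have hge : dist a p - α ≤ dist p m := by
        have h1 := dist_triangle a m p
        have c1 : dist m p = dist p m := dist_comm _ _
        linarith
      have hle : dist p m ≤ dist a p - α := by
        have h4 := H p m a b
        have c1 : dist p a = dist a p := dist_comm _ _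
        have c2 : dist m a = dist a m := dist_comm _ _
        rcases le_max_iff.mp h4 with h | h <;> linarith
      linarith
    by_cases hp : p = m
    · exact ⟨⟨α, Set.mem_Icc.mpr ⟨hα0, hαd⟩⟩, hp.symm⟩
    exfalso
    have hpm0 : 0 < dist p m := dist_pos.mpr hp
    have hγs₀ : γ s₀.1 = p := hγs s₀.1 s₀.2
    have hs₁ : ∃ s₁ : Set.Icc (0:ℝ) 1, s₁.1 ≤ s₀.1 ∧ c s₁ = m := by
      by_cases hα0' : α = 0
      · refine ⟨⟨0, Set.mem_Icc.mpr ⟨le_rfl, zero_le_one⟩⟩, s₀.2.1, ?_⟩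
        have hd : dist a m = 0 := by rw [ham, hα0']
        rw [hA]
        exact dist_eq_zero.mp hd
      · have hα0lt : 0 < α := lt_of_le_of_ne hα0 (Ne.symm hα0')
        have ham' : a ≠ m := by
          intro h
          rw [← h, dist_self] at ham
          linarith
        have hnb : ¬ Same m a p := by
          unfold Same
          have c1 : dist m p = dist p m := dist_comm _ _
          push_neg
          linarith
        obtain ⟨s, hsI, hsm⟩ := path_hits H hγ s₀.2.1 m (hγ0 ▸ ham') (hγs₀ ▸ hp)
          (by rw [hγ0, hγs₀]; exact hnb)
        have hsIcc : s ∈ Set.Icc (0:ℝ) 1 := ⟨hsI.1, le_trans hsI.2 s₀.2.2⟩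
        exact ⟨⟨s, hsIcc⟩, hsI.2, by rw [← hγs s hsIcc]; exact hsm⟩
    have hs₂ : ∃ s₂ : Set.Icc (0:ℝ) 1, s₀.1 ≤ s₂.1 ∧ c s₂ = m := by
      by_cases hαd' : α = dist a b
      · refine ⟨⟨1, Set.mem_Icc.mpr ⟨zero_le_one, le_rfl⟩⟩, s₀.2.2, ?_⟩
        have hd : dist m b = 0 := by rw [hmb, hαd']; ring
        rw [hB]
        exact (dist_eq_zero.mp hd).symm
      · have hαdlt : α < dist a b := lt_of_le_of_ne hαd hαd'
        have hbm' : b ≠ m := by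
          intro h
          rw [← h, dist_self] at hmb
          linarith
        have hnb : ¬ Same m p b := by
          unfold Same
          push_neg
          linarith
        obtain ⟨s, hsI, hsm⟩ := path_hits H hγ s₀.2.2 m (hγs₀ ▸ hp) (hγ1 ▸ hbm')
          (by rw [hγ1, hγs₀]; exact hnb)
        have hsIcc : s ∈ Set.Icc (0:ℝ) 1 := ⟨le_trans s₀.2.1 hsI.1, hsI.2⟩
        exact ⟨⟨s, hsIcc⟩, hsI.1, by rw [← hγs s hsIcc]; exact hsm⟩
    obtain ⟨s₁, hs₁le, hcs₁⟩ := hs₁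
    obtain ⟨s₂, hs₂ge, hcs₂⟩ := hs₂
    have h12 : s₁ = s₂ := hinj (by rw [hcs₁, hcs₂])
    have hne₁ : s₁ ≠ s₀ := by
      intro h
      rw [h, ← hpp] at hcs₁
      exact hp hcs₁
    have hne₂ : s₂ ≠ s₀ := by
      intro h
      rw [h, ← hpp] at hcs₂
      exact hp hcs₂
    have hlt₁ : s₁.1 < s₀.1 := lt_of_le_of_ne hs₁le (fun h => hne₁ (Subtype.ext h))
    have hlt₂ : s₀.1 < s₂.1 := lt_of_le_of_ne hs₂ge (fun h => hne₂ (Subtype.ext h.symm))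
    rw [h12] at hlt₁
    linarith
  · -- range φ ⊆ range c
    rintro _ ⟨t, rfl⟩
    have ht1 : dist a (φ t) = t.1 := (hbtw t).1
    have ht2 : dist (φ t) b = dist a b - t.1 := (hbtw t).2
    by_cases ht0 : t.1 = 0
    · have he : φ t = a := by
        rw [← dist_eq_zero, dist_comm, ht1, ht0]
      exact ⟨⟨0, Set.mem_Icc.mpr ⟨le_rfl, zero_le_one⟩⟩, by rw [hA, he]⟩
    by_cases htd : t.1 = dist a b
    · have he : φ t = b := by
        rw [← dist_eq_zero, ht2, htd]; ring
      exact ⟨⟨1, Set.mem_Icc.mpr ⟨zero_le_one, le_rfl⟩⟩, by rw [hB, he]⟩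
    have ht0' : 0 < t.1 := lt_of_le_of_ne t.2.1 (Ne.symm ht0)
    have htd' : t.1 < dist a b := lt_of_le_of_ne t.2.2 htd
    have ham' : a ≠ φ t := by
      intro h
      rw [← h, dist_self] at ht1
      linarith
    have hbm' : b ≠ φ t := by
      intro h
      rw [← h, dist_self] at ht2
      linarith
    have hnb : ¬ Same (φ t) a b := by
      unfold Same
      push_neg
      linarith
    obtain ⟨s, hsI, hsm⟩ := path_hits H hγ zero_le_one (φ t) (hγ0 ▸ ham') (hγ1 ▸ hbm')
      (by rw [hγ0, hγ1]; exact hnb)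
    exact ⟨⟨s, hsI⟩, by rw [← hγs s hsI]; exact hsm⟩


lemma segmentMap_continuous {x y : T} {φ : Set.Icc (0:ℝ) (dist x y) → T}
    (hφ : IsSegmentMap x y φ) : Continuous φ :=
  (Isometry.of_dist_eq (fun a b => by
    rw [hφ.1 a b, Subtype.dist_eq, Real.dist_eq])).continuous

lemma segmentMap_agree (h : IsRTree T) {x y z : T}
    {φ : Set.Icc (0:ℝ) (dist x y) → T} {ψ : Set.Icc (0:ℝ) (dist x z) → T}
    (hφ : IsSegmentMap x y φ) (hψ : IsSegmentMap x z ψ)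
    {t : ℝ} (h1 : t ∈ Set.Icc (0:ℝ) (dist x y)) (h2 : t ∈ Set.Icc (0:ℝ) (dist x z))
    (heq : φ ⟨t, h1⟩ = ψ ⟨t, h2⟩) :
    ∀ s (hs0 : 0 ≤ s) (hst : s ≤ t),
      φ ⟨s, Set.mem_Icc.mpr ⟨hs0, le_trans hst h1.2⟩⟩ =
      ψ ⟨s, Set.mem_Icc.mpr ⟨hs0, le_trans hst h2.2⟩⟩ := by
  intro s hs0 hst
  set q := φ ⟨t, h1⟩ with hq
  have dq1 : dist x q = t := (RBtw_of_segmentMap hφ ⟨t, h1⟩).1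
  have dq2 : dist x (ψ ⟨t, h2⟩) = t := (RBtw_of_segmentMap hψ ⟨t, h2⟩).1
  -- restrictions of φ and ψ to [0, t] are segment maps from x to q
  set χ₁ : Set.Icc (0:ℝ) (dist x q) → T :=
    fun s => φ ⟨s.1, Set.mem_Icc.mpr ⟨s.2.1, le_trans (le_of_le_of_eq s.2.2 dq1) h1.2⟩⟩ with hχ₁
  set χ₂ : Set.Icc (0:ℝ) (dist x q) → T :=
    fun s => ψ ⟨s.1, Set.mem_Icc.mpr ⟨s.2.1, le_trans (le_of_le_of_eq s.2.2 dq1) h2.2⟩⟩ with hχ₂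
  have hs₁ : IsSegmentMap x q χ₁ := by
    refine ⟨fun a b => hφ.1 _ _, ?_, ?_⟩
    · exact hφ.2.1
    · exact (congrArg φ (Subtype.ext dq1)).trans hq.symm
  have hs₂ : IsSegmentMap x q χ₂ := by
    refine ⟨fun a b => hψ.1 _ _, ?_, ?_⟩
    · exact hψ.2.1
    · exact (congrArg ψ (Subtype.ext dq1)).trans heq.symm
  have huniq := (h.1 x q).unique hs₁ hs₂
  have := congrFun huniq ⟨s, Set.mem_Icc.mpr ⟨hs0, le_of_le_of_eq hst dq1.symm⟩⟩
  exact this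

section Forward

variable (h : IsRTree T)

/-- The canonical segment map between two points of an `ℝ`-tree. -/
noncomputable def seg (x y : T) : Set.Icc (0:ℝ) (dist x y) → T := (h.1 x y).exists.choose

lemma seg_spec (x y : T) : IsSegmentMap x y (seg h x y) := (h.1 x y).exists.choose_spec

/-- Parameters at which the segments from `x` to `y` and from `x` to `z` agree. -/
def meetSet (x y z : T) : Set ℝ :=
  {t | ∃ (h1 : t ∈ Set.Icc (0:ℝ) (dist x y)) (h2 : t ∈ Set.Icc (0:ℝ) (dist x z)),
      seg h x y ⟨t, h1⟩ = seg h x z ⟨t, h2⟩}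

lemma meetSet_zero (x y z : T) : 0 ∈ meetSet h x y z :=
  ⟨Set.mem_Icc.mpr ⟨le_rfl, dist_nonneg⟩, Set.mem_Icc.mpr ⟨le_rfl, dist_nonneg⟩,
    (seg_spec h x y).2.1.trans (seg_spec h x z).2.1.symm⟩

lemma meetSet_nonempty (x y z : T) : (meetSet h x y z).Nonempty := ⟨0, meetSet_zero h x y z⟩

lemma meetSet_bddAbove (x y z : T) : BddAbove (meetSet h x y z) :=
  ⟨dist x y, fun t ht => ht.1.2⟩

/-- The parameter at which the segments from `x` to `y` and from `x` to `z` separate. -/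
noncomputable def meet (x y z : T) : ℝ := sSup (meetSet h x y z)

lemma meet_nonneg (x y z : T) : 0 ≤ meet h x y z :=
  le_csSup (meetSet_bddAbove h x y z) (meetSet_zero h x y z)

lemma meet_le_left (x y z : T) : meet h x y z ≤ dist x y :=
  csSup_le (meetSet_nonempty h x y z) (fun t ht => ht.1.2)

lemma meet_le_right (x y z : T) : meet h x y z ≤ dist x z :=
  csSup_le (meetSet_nonempty h x y z) (fun t ht => ht.2.choose.2)

lemma meet_mem (x y z : T) : meet h x y z ∈ meetSet h x y z := by
  have hmem1 : meet h x y z ∈ Set.Icc (0:ℝ) (dist x y) :=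
    Set.mem_Icc.mpr ⟨meet_nonneg h x y z, meet_le_left h x y z⟩
  have hmem2 : meet h x y z ∈ Set.Icc (0:ℝ) (dist x z) :=
    Set.mem_Icc.mpr ⟨meet_nonneg h x y z, meet_le_right h x y z⟩
  refine ⟨hmem1, hmem2, ?_⟩
  by_contra hne
  have hpos : 0 < dist (seg h x y ⟨meet h x y z, hmem1⟩) (seg h x z ⟨meet h x y z, hmem2⟩) :=
    dist_pos.mpr hne
  set ε := dist (seg h x y ⟨meet h x y z, hmem1⟩) (seg h x z ⟨meet h x y z, hmem2⟩) / 4 with hε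
  obtain ⟨t, ht, htgt⟩ := Real.add_neg_lt_sSup (meetSet_nonempty h x y z)
    (show -ε < 0 by linarith)
  obtain ⟨ht1, ht2, hteq⟩ := ht
  have htle : t ≤ meet h x y z := le_csSup (meetSet_bddAbove h x y z) ⟨ht1, ht2, hteq⟩
  have d1 : dist (seg h x y ⟨meet h x y z, hmem1⟩) (seg h x y ⟨t, ht1⟩) = meet h x y z - t := by
    rw [(seg_spec h x y).1]
    simp only
    rw [abs_of_nonneg (by linarith)]
  have d2 : dist (seg h x z ⟨t, ht2⟩) (seg h x z ⟨meet h x y z, hmem2⟩) = meet h x y z - t := by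
    rw [(seg_spec h x z).1]
    simp only
    rw [abs_of_nonpos (by linarith)]
    ring
  have htri := dist_triangle4 (seg h x y ⟨meet h x y z, hmem1⟩) (seg h x y ⟨t, ht1⟩)
    (seg h x z ⟨t, ht2⟩) (seg h x z ⟨meet h x y z, hmem2⟩)
  rw [d1, d2, hteq, dist_self] at htri
  have hms : meet h x y z = sSup (meetSet h x y z) := rfl
  linarith [htri, htgt, htle, hpos]

lemma meet_ultra (x y z w : T) :
    min (meet h x y w) (meet h x z w) ≤ meet h x y z := by
  set a := min (meet h x y w) (meet h x z w) with ha
  have ha0 : 0 ≤ a := le_min (meet_nonneg h x y w) (meet_nonneg h x z w)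
  have hayw : a ≤ meet h x y w := min_le_left _ _
  have hazw : a ≤ meet h x z w := min_le_right _ _
  have hay : a ≤ dist x y := le_trans hayw (meet_le_left h x y w)
  have haz : a ≤ dist x z := le_trans hazw (meet_le_left h x z w)
  have haw : a ≤ dist x w := le_trans hayw (meet_le_right h x y w)
  obtain ⟨m1, m2, meq⟩ := meet_mem h x y w
  obtain ⟨n1, n2, neq⟩ := meet_mem h x z w
  have e1 := segmentMap_agree h (seg_spec h x y) (seg_spec h x w) m1 m2 meq a ha0 hayw
  have e2 := segmentMap_agree h (seg_spec h x z) (seg_spec h x w) n1 n2 neq a ha0 hazw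
  refine le_csSup (meetSet_bddAbove h x y z) ⟨Set.mem_Icc.mpr ⟨ha0, hay⟩,
    Set.mem_Icc.mpr ⟨ha0, haz⟩, ?_⟩
  rw [e1, e2]

lemma meet_dist (x y z : T) :
    dist y z = (dist x y - meet h x y z) + (dist x z - meet h x y z) := by
  obtain ⟨hm1, hm2, hmeq⟩ := meet_mem h x y z
  set t := meet h x y z with htt
  by_cases hy : t = dist x y
  · have h1 : seg h x y ⟨t, hm1⟩ = y :=
      (congrArg (seg h x y) (Subtype.ext hy)).trans (seg_spec h x y).2.2
    have h2 : dist (seg h x z ⟨t, hm2⟩) z = dist x z - t :=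
      (RBtw_of_segmentMap (seg_spec h x z) ⟨t, hm2⟩).2
    rw [← hmeq, h1] at h2
    rw [h2, ← hy]
    ring
  by_cases hz : t = dist x z
  · have h1 : seg h x z ⟨t, hm2⟩ = z :=
      (congrArg (seg h x z) (Subtype.ext hz)).trans (seg_spec h x z).2.2
    have h2 : dist (seg h x y ⟨t, hm1⟩) y = dist x y - t :=
      (RBtw_of_segmentMap (seg_spec h x y) ⟨t, hm1⟩).2
    rw [hmeq, h1] at h2
    rw [dist_comm y z, h2, ← hz]
    ring
  have ht0 : 0 ≤ t := meet_nonneg h x y z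
  have hty : t < dist x y := lt_of_le_of_ne (meet_le_left h x y z) hy
  have htz : t < dist x z := lt_of_le_of_ne (meet_le_right h x y z) hz
  set L : ℝ := (dist x y - t) + (dist x z - t) with hLL
  have hL0 : 0 < L := by rw [hLL]; linarith
  have hLne : L ≠ 0 := ne_of_gt hL0
  set c : Set.Icc (0:ℝ) 1 → T := fun τ =>
    if τ.1 * L ≤ dist x y - t then
      seg h x y (Set.projIcc 0 (dist x y) dist_nonneg (dist x y - τ.1 * L))
    else
      seg h x z (Set.projIcc 0 (dist x z) dist_nonneg (τ.1 * L - dist x y + 2 * t)) with hcc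
  have huL : ∀ τ : Set.Icc (0:ℝ) 1, 0 ≤ τ.1 * L ∧ τ.1 * L ≤ L := by
    intro τ
    constructor
    · exact mul_nonneg τ.2.1 hL0.le
    · nlinarith [τ.2.2, hL0, τ.2.1]
  have hmemA : ∀ τ : Set.Icc (0:ℝ) 1, τ.1 * L ≤ dist x y - t →
      dist x y - τ.1 * L ∈ Set.Icc (0:ℝ) (dist x y) := by
    intro τ hle
    exact Set.mem_Icc.mpr ⟨by linarith, by linarith [(huL τ).1]⟩
  have hmemB : ∀ τ : Set.Icc (0:ℝ) 1, ¬ (τ.1 * L ≤ dist x y - t) →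
      τ.1 * L - dist x y + 2 * t ∈ Set.Icc (0:ℝ) (dist x z) := by
    intro τ hgt
    push_neg at hgt
    exact Set.mem_Icc.mpr ⟨by linarith, by linarith [(huL τ).2]⟩
  have hcif : ∀ (τ : Set.Icc (0:ℝ) 1) (hle : τ.1 * L ≤ dist x y - t),
      c τ = seg h x y ⟨dist x y - τ.1 * L, hmemA τ hle⟩ := by
    intro τ hle
    rw [hcc]
    simp only
    rw [if_pos hle]
    exact congrArg _ (Set.projIcc_of_mem _ (hmemA τ hle))
  have hcelse : ∀ (τ : Set.Icc (0:ℝ) 1) (hgt : ¬ (τ.1 * L ≤ dist x y - t)),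
      c τ = seg h x z ⟨τ.1 * L - dist x y + 2 * t, hmemB τ hgt⟩ := by
    intro τ hgt
    rw [hcc]
    simp only
    rw [if_neg hgt]
    exact congrArg _ (Set.projIcc_of_mem _ (hmemB τ hgt))
  have hccont : Continuous c := by
    rw [hcc]
    refine Continuous.if_le ?_ ?_ ?_ continuous_const ?_
    · exact (segmentMap_continuous (seg_spec h x y)).comp
        (continuous_projIcc.comp (by fun_prop))
    · exact (segmentMap_continuous (seg_spec h x z)).comp
        (continuous_projIcc.comp (by fun_prop))
    · fun_prop
    · intro τ heq
      have e1 : dist x y - τ.1 * L = t := by rw [heq]; ring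
      have e2 : τ.1 * L - dist x y + 2 * t = t := by rw [heq]; ring
      rw [e1, e2, Set.projIcc_of_mem _ hm1, Set.projIcc_of_mem _ hm2]
      exact hmeq
  -- distances from x determine the parameter
  have hdx1 : ∀ (s : ℝ) (hs : s ∈ Set.Icc (0:ℝ) (dist x y)),
      dist x (seg h x y ⟨s, hs⟩) = s := fun s hs =>
    (RBtw_of_segmentMap (seg_spec h x y) ⟨s, hs⟩).1
  have hdx2 : ∀ (s : ℝ) (hs : s ∈ Set.Icc (0:ℝ) (dist x z)),
      dist x (seg h x z ⟨s, hs⟩) = s := fun s hs =>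
    (RBtw_of_segmentMap (seg_spec h x z) ⟨s, hs⟩).1
  have hmixed : ∀ (τ₁ τ₂ : Set.Icc (0:ℝ) 1) (h₁ : τ₁.1 * L ≤ dist x y - t)
      (h₂ : ¬ (τ₂.1 * L ≤ dist x y - t)), c τ₁ ≠ c τ₂ := by
    intro τ₁ τ₂ h₁ h₂ hceq
    rw [hcif τ₁ h₁, hcelse τ₂ h₂] at hceq
    have e1 := hdx1 _ (hmemA τ₁ h₁)
    have e2 := hdx2 _ (hmemB τ₂ h₂)
    rw [hceq] at e1
    rw [e2] at e1
    -- e1 : τ₂L - dxy + 2t = dxy - τ₁L, both sides equal some s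
    have hs' : t < τ₂.1 * L - dist x y + 2 * t := by
      push_neg at h₂
      linarith
    have hsS : (τ₂.1 * L - dist x y + 2 * t) ∈ meetSet h x y z := by
      refine ⟨e1 ▸ hmemA τ₁ h₁, hmemB τ₂ h₂, ?_⟩
      rw [← hceq]
      exact congrArg _ (Subtype.ext e1)
    have : τ₂.1 * L - dist x y + 2 * t ≤ t := le_csSup (meetSet_bddAbove h x y z) hsS
    linarith
  have hinj : Function.Injective c := by
    intro τ₁ τ₂ hceq
    by_cases h₁ : τ₁.1 * L ≤ dist x y - t <;> by_cases h₂ : τ₂.1 * L ≤ dist x y - t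
    · rw [hcif τ₁ h₁, hcif τ₂ h₂] at hceq
      have e1 := hdx1 _ (hmemA τ₁ h₁)
      have e2 := hdx1 _ (hmemA τ₂ h₂)
      rw [hceq, e2] at e1
      have : τ₁.1 = τ₂.1 := mul_right_cancel₀ hLne (by linarith)
      exact Subtype.ext this
    · exact absurd hceq (hmixed τ₁ τ₂ h₁ h₂)
    · exact absurd hceq.symm (hmixed τ₂ τ₁ h₂ h₁)
    · rw [hcelse τ₁ h₁, hcelse τ₂ h₂] at hceq
      have e1 := hdx2 _ (hmemB τ₁ h₁)
      have e2 := hdx2 _ (hmemB τ₂ h₂)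
      rw [hceq, e2] at e1
      have : τ₁.1 = τ₂.1 := mul_right_cancel₀ hLne (by linarith)
      exact Subtype.ext this
  have hc0 : c ⟨0, Set.mem_Icc.mpr ⟨le_rfl, zero_le_one⟩⟩ = y := by
    have hle : ((⟨0, Set.mem_Icc.mpr ⟨le_rfl, zero_le_one⟩⟩ : Set.Icc (0:ℝ) 1)).1 * L ≤
        dist x y - t := by
      show (0:ℝ) * L ≤ dist x y - t
      rw [zero_mul]
      linarith
    rw [hcif _ hle]
    refine (congrArg (seg h x y) (Subtype.ext ?_)).trans (seg_spec h x y).2.2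
    show dist x y - (0:ℝ) * L = dist x y
    ring
  have hc1 : c ⟨1, Set.mem_Icc.mpr ⟨zero_le_one, le_rfl⟩⟩ = z := by
    have hgt : ¬ ((⟨1, Set.mem_Icc.mpr ⟨zero_le_one, le_rfl⟩⟩ : Set.Icc (0:ℝ) 1)).1 * L ≤
        dist x y - t := by
      show ¬ ((1:ℝ) * L ≤ dist x y - t)
      rw [one_mul, hLL]
      push_neg
      linarith
    rw [hcelse _ hgt]
    refine (congrArg (seg h x z) (Subtype.ext ?_)).trans (seg_spec h x z).2.2
    show (1:ℝ) * L - dist x y + 2 * t = dist x z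
    rw [one_mul, hLL]
    ring
  have hrange := h.2 c hccont hinj
    (seg h (c ⟨0, Set.mem_Icc.mpr ⟨le_rfl, zero_le_one⟩⟩)
           (c ⟨1, Set.mem_Icc.mpr ⟨zero_le_one, le_rfl⟩⟩))
    (seg_spec h _ _)
  -- the branch point lies on the range of c
  have hτm : ((dist x y - t) / L) ∈ Set.Icc (0:ℝ) 1 :=
    Set.mem_Icc.mpr ⟨div_nonneg (by linarith) hL0.le, (div_le_one hL0).mpr (by rw [hLL]; linarith)⟩
  have hτmle : ((⟨(dist x y - t)/L, hτm⟩ : Set.Icc (0:ℝ) 1)).1 * L ≤ dist x y - t := by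
    show (dist x y - t)/L * L ≤ dist x y - t
    rw [div_mul_cancel₀ _ hLne]
  have hm_in : seg h x y ⟨t, hm1⟩ ∈ Set.range c := by
    refine ⟨⟨(dist x y - t)/L, hτm⟩, ?_⟩
    rw [hcif _ hτmle]
    refine congrArg (seg h x y) (Subtype.ext ?_)
    show dist x y - (dist x y - t)/L * L = t
    rw [div_mul_cancel₀ _ hLne]
    ring
  rw [hrange] at hm_in
  obtain ⟨t0, ht0⟩ := hm_in
  have hex : ∃ r : ℝ, dist (c ⟨0, Set.mem_Icc.mpr ⟨le_rfl, zero_le_one⟩⟩) (seg h x y ⟨t, hm1⟩) = r ∧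
      dist (seg h x y ⟨t, hm1⟩) (c ⟨1, Set.mem_Icc.mpr ⟨zero_le_one, le_rfl⟩⟩) =
      dist (c ⟨0, Set.mem_Icc.mpr ⟨le_rfl, zero_le_one⟩⟩)
           (c ⟨1, Set.mem_Icc.mpr ⟨zero_le_one, le_rfl⟩⟩) - r := by
    refine ⟨t0.1, ?_, ?_⟩
    · rw [← ht0]
      exact (RBtw_of_segmentMap (seg_spec h _ _) t0).1
    · rw [← ht0]
      exact (RBtw_of_segmentMap (seg_spec h _ _) t0).2
  obtain ⟨r, f1, f2⟩ := hex
  rw [hc0] at f1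
  rw [hc0, hc1] at f2
  have g1 : dist y (seg h x y ⟨t, hm1⟩) = dist x y - t := by
    rw [dist_comm]
    exact (RBtw_of_segmentMap (seg_spec h x y) ⟨t, hm1⟩).2
  have g2 : dist (seg h x y ⟨t, hm1⟩) z = dist x z - t := by
    rw [hmeq]
    exact (RBtw_of_segmentMap (seg_spec h x z) ⟨t, hm2⟩).2
  rw [g1] at f1
  rw [g2] at f2
  linarith

lemma fourpt_of_isRTree (h : IsRTree T) (x y u v : T) :
    dist x y + dist u v ≤ max (dist x u + dist y v) (dist x v + dist y u) := by
  have e1 := meet_dist h v x y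
  have e2 := meet_dist h v x u
  have e3 := meet_dist h v y u
  have hm := meet_ultra h v x y u
  have c1 : dist u v = dist v u := dist_comm _ _
  have c2 : dist y v = dist v y := dist_comm _ _
  have c3 : dist x v = dist v x := dist_comm _ _
  rcases le_total (meet h v x u) (meet h v y u) with hc | hc
  · rw [min_eq_left hc] at hm
    apply le_max_of_le_left
    linarith
  · rw [min_eq_right hc] at hm
    apply le_max_of_le_right
    linarith

lemma connected_of_isRTree (h : IsRTree T) [Nonempty T] : ConnectedSpace T := by
  have hpc : PathConnectedSpace T := by
    refine ⟨inferInstance, fun x y => ?_⟩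
    have hφ := seg_spec h x y
    have hcont : Continuous (seg h x y) := segmentMap_continuous hφ
    have hmem : ∀ s : unitInterval, s.1 * dist x y ∈ Set.Icc (0:ℝ) (dist x y) := by
      intro s
      constructor
      · exact mul_nonneg s.2.1 dist_nonneg
      · nlinarith [s.2.1, s.2.2, dist_nonneg (x := x) (y := y)]
    refine ⟨⟨⟨fun s => seg h x y ⟨s.1 * dist x y, hmem s⟩, ?_⟩, ?_, ?_⟩⟩
    · exact hcont.comp (Continuous.subtype_mk (by fun_prop) _)
    · refine (congrArg (seg h x y) (Subtype.ext ?_)).trans hφ.2.1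
      show ((0 : unitInterval)).1 * dist x y = 0
      norm_num
    · refine (congrArg (seg h x y) (Subtype.ext ?_)).trans hφ.2.2
      show ((1 : unitInterval)).1 * dist x y = dist x y
      norm_num
  exact PathConnectedSpace.connectedSpace

end Forward

end RTreeAux

/-- A metric space is an `ℝ`-tree iff it is connected and satisfies the
four-point condition. -/
theorem stmt1 (T : Type*) [MetricSpace T] [Nonempty T] :
    IsRTree T ↔ ConnectedSpace T ∧
      ∀ x y u v : T, dist x y + dist u v ≤
        max (dist x u + dist y v) (dist x v + dist y u) := by
  constructor
  · intro h
    exact ⟨connected_of_isRTree h, fourpt_of_isRTree h⟩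
  · rintro ⟨hconn, H⟩
    haveI := hconn
    constructor
    · intro x y
      obtain ⟨φ, hφ⟩ := exists_segmentMap H x y
      exact ⟨φ, hφ, fun ψ hψ => segmentMap_unique H hψ hφ⟩
    · intro c hc hinj φ hφ
      exact axiom2_of_fourpt H c hc hinj φ hφ
end

section
/- Let $T$ be a compact rooted $\mathbb{R}$-tree with root $\rho$. The collection $\mathcal{B}$ of pre-balls — sets of the form $B(x,C) = T_x \setminus \bigcup_{y \in C} T_y$ where $x \in T$, $C$ is a finite subset of $T_x$ whose elements are all $\ge x$ and pairwise incomparable, and $T_z = \{w \in T : z \le w\}$ — is a semi-ring of sets: it contains the empty set, is closed under pairwise intersection, and the set difference of two pre-balls is a finite disjoint union of pre-balls. -/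
/-- The tree partial order rooted at `ρ`: `x ≤ y` iff `x` lies on the geodesic
segment from `ρ` to `y`. -/
def treeLE {T : Type*} [MetricSpace T] (ρ x y : T) : Prop :=
  dist ρ x + dist x y = dist ρ y

/-- The subtree `T_x = {w : x ≤ w}` above `x`. -/
def subtreeAt {T : Type*} [MetricSpace T] (ρ x : T) : Set T :=
  {w | treeLE ρ x w}

/-- The collection of pre-balls `B(x, C) = T_x \ ⋃_{y ∈ C} T_y`, where `C`
is a finite pre-cutset of `T_x` (all elements `≥ x`, pairwise incomparable). -/
def preBalls {T : Type*} [MetricSpace T] (ρ : T) : Set (Set T) :=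
  {B | ∃ (x : T) (C : Finset T),
    (∀ y ∈ C, treeLE ρ x y) ∧
    (∀ y ∈ C, ∀ z ∈ C, y ≠ z → ¬ treeLE ρ y z) ∧
    B = subtreeAt ρ x \ ⋃ y ∈ C, subtreeAt ρ y}

section Basic
variable {T : Type*} [MetricSpace T] {ρ x y z w : T}

lemma treeLE_refl (ρ x : T) : treeLE ρ x x := by simp [treeLE]

lemma treeLE_trans (h1 : treeLE ρ x y) (h2 : treeLE ρ y z) : treeLE ρ x z := by
  unfold treeLE at *
  have t1 := dist_triangle ρ x z
  have t2 := dist_triangle x y z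
  linarith

lemma treeLE_dist_le (h : treeLE ρ x y) : dist ρ x ≤ dist ρ y := by
  unfold treeLE at h
  have := dist_nonneg (x := x) (y := y)
  linarith

lemma treeLE_antisymm (h1 : treeLE ρ x y) (h2 : treeLE ρ y x) : x = y := by
  unfold treeLE at *
  have : dist x y = 0 := by rw [dist_comm y x] at h2; linarith
  exact dist_eq_zero.mp this

lemma treeLE_eq_of_dist (h : treeLE ρ x y) (hd : dist ρ y ≤ dist ρ x) : x = y := by
  unfold treeLE at h
  have hnn := dist_nonneg (x := x) (y := y)
  have : dist x y = 0 := by linarith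
  exact dist_eq_zero.mp this

lemma segmentMap_dist_left {φ : Set.Icc (0:ℝ) (dist x y) → T}
    (h : IsSegmentMap x y φ) (a : Set.Icc (0:ℝ) (dist x y)) : dist x (φ a) = a.1 := by
  have h0 := h.1 ⟨0, Set.mem_Icc.mpr ⟨le_rfl, dist_nonneg⟩⟩ a
  rw [h.2.1] at h0
  rw [h0, abs_of_nonpos (by simpa using a.2.1)]
  simp

lemma segmentMap_dist_right {φ : Set.Icc (0:ℝ) (dist x y) → T}
    (h : IsSegmentMap x y φ) (a : Set.Icc (0:ℝ) (dist x y)) : dist (φ a) y = dist x y - a.1 := by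
  have h0 := h.1 a ⟨dist x y, Set.mem_Icc.mpr ⟨dist_nonneg, le_rfl⟩⟩
  rw [h.2.2] at h0
  rw [h0, abs_of_nonpos (by simp; exact a.2.2)]
  ring

end Basic

section Core
variable {T : Type*} [MetricSpace T] {ρ x y z w : T}

lemma onSegment (hT : ∀ a b : T, ∃! φ : Set.Icc (0:ℝ) (dist a b) → T, IsSegmentMap a b φ)
    (ρ w : T) :
    ∃ φ : Set.Icc (0:ℝ) (dist ρ w) → T, IsSegmentMap ρ w φ ∧
      ∀ (u : T), treeLE ρ u w → ∀ (h : dist ρ u ∈ Set.Icc (0:ℝ) (dist ρ w)),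
        φ ⟨dist ρ u, h⟩ = u := by
  obtain ⟨φ, hφ, huniq⟩ := hT ρ w
  refine ⟨φ, hφ, ?_⟩
  intro u hu h
  obtain ⟨φ₁, hφ₁, -⟩ := hT ρ u
  obtain ⟨φ₂, hφ₂, -⟩ := hT u w
  have hd : dist ρ w = dist ρ u + dist u w := hu.symm
  have hmem2 : ∀ t : Set.Icc (0:ℝ) (dist ρ w), ¬ t.1 ≤ dist ρ u →
      t.1 - dist ρ u ∈ Set.Icc (0:ℝ) (dist u w) := by
    intro t ht
    constructor
    · linarith [not_le.mp ht]
    · have := t.2.2; linarith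
  classical
  set ψ : Set.Icc (0:ℝ) (dist ρ w) → T := fun t =>
    if ht : t.1 ≤ dist ρ u then φ₁ ⟨t.1, t.2.1, ht⟩ else φ₂ ⟨t.1 - dist ρ u, hmem2 t ht⟩
    with hψdef
  have hψ1 : ∀ (t : Set.Icc (0:ℝ) (dist ρ w)) (ht : t.1 ≤ dist ρ u),
      ψ t = φ₁ ⟨t.1, t.2.1, ht⟩ := fun t ht => dif_pos ht
  have hψ2 : ∀ (t : Set.Icc (0:ℝ) (dist ρ w)) (ht : ¬ t.1 ≤ dist ρ u),
      ψ t = φ₂ ⟨t.1 - dist ρ u, hmem2 t ht⟩ := fun t ht => dif_neg ht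
  have hρ2 : ∀ b : Set.Icc (0:ℝ) (dist u w), dist ρ u + b.1 ≤ dist ρ (φ₂ b) := by
    intro b
    have h1 := dist_triangle ρ (φ₂ b) w
    have h2 := segmentMap_dist_right hφ₂ b
    linarith
  have hmix : ∀ (a : Set.Icc (0:ℝ) (dist ρ u)) (b : Set.Icc (0:ℝ) (dist u w)),
      dist (φ₁ a) (φ₂ b) = (dist ρ u - a.1) + b.1 := by
    intro a b
    have h1 := dist_triangle (φ₁ a) u (φ₂ b)
    have h2 := segmentMap_dist_right hφ₁ a
    have h3 := segmentMap_dist_left hφ₂ b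
    have h4 := dist_triangle ρ (φ₁ a) (φ₂ b)
    have h5 := segmentMap_dist_left hφ₁ a
    have h6 := hρ2 b
    apply le_antisymm <;> linarith
  have hψseg : IsSegmentMap ρ w ψ := by
    refine ⟨?_, ?_, ?_⟩
    · intro a b
      by_cases ha : a.1 ≤ dist ρ u <;> by_cases hb : b.1 ≤ dist ρ u
      · rw [hψ1 a ha, hψ1 b hb]
        exact hφ₁.1 _ _
      · rw [hψ1 a ha, hψ2 b hb, hmix]
        rw [abs_of_nonpos (by linarith [not_le.mp hb])]
        simp
      · rw [hψ2 a ha, hψ1 b hb, dist_comm, hmix]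
        rw [abs_of_nonneg (by linarith [not_le.mp ha])]
        simp
      · rw [hψ2 a ha, hψ2 b hb, hφ₂.1]
        congr 1
        simp
    · rw [hψ1 _ (by simpa using dist_nonneg)]
      exact hφ₁.2.1
    · by_cases hend : (dist ρ w : ℝ) ≤ dist ρ u
      · have huw0 : dist u w = 0 := le_antisymm (by linarith) dist_nonneg
        have huw : u = w := dist_eq_zero.mp huw0
        have hgen : ∀ a : Set.Icc (0:ℝ) (dist ρ u), a.1 = dist ρ w → φ₁ a = w := by
          intro a ha
          rw [← huw]
          apply dist_eq_zero.mp
          rw [segmentMap_dist_right hφ₁, ha]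
          linarith
        rw [hψ1 _ hend]
        exact hgen _ rfl
      · rw [hψ2 _ hend]
        refine dist_eq_zero.mp ?_
        rw [segmentMap_dist_right hφ₂]
        simp
        linarith
  have heq := huniq ψ hψseg
  rw [← heq, hψ1 _ le_rfl]
  exact hφ₁.2.2

lemma treeLE_total (hT : ∀ a b : T, ∃! φ : Set.Icc (0:ℝ) (dist a b) → T, IsSegmentMap a b φ)
    (hx : treeLE ρ x w) (hy : treeLE ρ y w) :
    treeLE ρ x y ∨ treeLE ρ y x := by
  obtain ⟨φ, hφ, hkey⟩ := onSegment hT ρ w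
  have hxm : dist ρ x ∈ Set.Icc (0:ℝ) (dist ρ w) := ⟨dist_nonneg, treeLE_dist_le hx⟩
  have hym : dist ρ y ∈ Set.Icc (0:ℝ) (dist ρ w) := ⟨dist_nonneg, treeLE_dist_le hy⟩
  have hxe := hkey x hx hxm
  have hye := hkey y hy hym
  have hcalc := hφ.1 ⟨dist ρ x, hxm⟩ ⟨dist ρ y, hym⟩
  rw [hxe, hye] at hcalc
  simp only at hcalc
  rcases le_total (dist ρ x) (dist ρ y) with h | h
  · left
    rw [abs_of_nonpos (by linarith)] at hcalc
    unfold treeLE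
    linarith
  · right
    rw [abs_of_nonneg (by linarith)] at hcalc
    unfold treeLE
    rw [dist_comm y x]
    linarith

end Core

section Balls
variable {T : Type*} [MetricSpace T]

lemma mem_subtreeAt {ρ x w : T} : w ∈ subtreeAt ρ x ↔ treeLE ρ x w := Iff.rfl

lemma exists_min (ρ : T) (S : Finset T) {y : T} (hy : y ∈ S) :
    ∃ m ∈ S, treeLE ρ m y ∧ ∀ z ∈ S, treeLE ρ z m → z = m := by
  classical
  obtain ⟨m, hm, hmin⟩ := Finset.exists_min_image (S.filter (fun z => treeLE ρ z y))
    (fun z => dist ρ z) ⟨y, Finset.mem_filter.mpr ⟨hy, treeLE_refl ρ y⟩⟩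
  rw [Finset.mem_filter] at hm
  refine ⟨m, hm.1, hm.2, ?_⟩
  intro z hz hzm
  have hzy : treeLE ρ z y := treeLE_trans hzm hm.2
  have := hmin z (Finset.mem_filter.mpr ⟨hz, hzy⟩)
  exact treeLE_eq_of_dist hzm this

lemma empty_mem (ρ : T) : (∅ : Set T) ∈ preBalls ρ := by
  refine ⟨ρ, {ρ}, ?_, ?_, ?_⟩
  · intro y hy
    rw [Finset.mem_singleton] at hy
    rw [hy]
    exact treeLE_refl _ _
  · intro y hy z hz hne
    exfalso
    apply hne
    rw [Finset.mem_singleton] at hy hz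
    rw [hy, hz]
  · simp

lemma subtree_mem (ρ y : T) : subtreeAt ρ y ∈ preBalls ρ :=
  ⟨y, ∅, by simp, by simp, by simp⟩

lemma inter_aux (hT1 : ∀ a b : T, ∃! φ : Set.Icc (0:ℝ) (dist a b) → T, IsSegmentMap a b φ)
    (ρ x x' : T) (C C' : Finset T) (hxx' : treeLE ρ x x') :
    (subtreeAt ρ x \ ⋃ y ∈ C, subtreeAt ρ y) ∩ (subtreeAt ρ x' \ ⋃ y ∈ C', subtreeAt ρ y)
      ∈ preBalls ρ := by
  classical
  by_cases hbad : ∃ y ∈ C ∪ C', treeLE ρ y x'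
  · obtain ⟨y, hy, hyx'⟩ := hbad
    have hempty : (subtreeAt ρ x \ ⋃ y ∈ C, subtreeAt ρ y) ∩
        (subtreeAt ρ x' \ ⋃ y ∈ C', subtreeAt ρ y) = (∅ : Set T) := by
      ext w
      simp only [Set.mem_inter_iff, Set.mem_diff, Set.mem_empty_iff_false, iff_false]
      rintro ⟨⟨hwx, hwC⟩, hwx', hwC'⟩
      have hyw : w ∈ subtreeAt ρ y := treeLE_trans hyx' hwx'
      rcases Finset.mem_union.mp hy with h | h
      · exact hwC (Set.mem_iUnion₂.mpr ⟨y, h, hyw⟩)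
      · exact hwC' (Set.mem_iUnion₂.mpr ⟨y, h, hyw⟩)
    rw [hempty]; exact empty_mem ρ
  · push_neg at hbad
    set S : Finset T := (C ∪ C').filter (fun y => treeLE ρ x' y) with hS
    set C₀ : Finset T := S.filter (fun m => ∀ z ∈ S, treeLE ρ z m → z = m) with hC₀
    refine ⟨x', C₀, ?_, ?_, ?_⟩
    · intro m hm
      exact (Finset.mem_filter.mp (Finset.mem_filter.mp hm).1).2
    · intro m hm m' hm' hne hle
      have hmS := (Finset.mem_filter.mp hm).1
      exact hne ((Finset.mem_filter.mp hm').2 m hmS hle)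
    · ext w
      simp only [Set.mem_inter_iff, Set.mem_diff]
      constructor
      · rintro ⟨⟨hwx, hwC⟩, hwx', hwC'⟩
        refine ⟨hwx', ?_⟩
        intro hmem
        obtain ⟨m, hm, hmw⟩ := Set.mem_iUnion₂.mp hmem
        have hmCC' : m ∈ C ∪ C' := (Finset.mem_filter.mp (Finset.mem_filter.mp hm).1).1
        rcases Finset.mem_union.mp hmCC' with h | h
        · exact hwC (Set.mem_iUnion₂.mpr ⟨m, h, hmw⟩)
        · exact hwC' (Set.mem_iUnion₂.mpr ⟨m, h, hmw⟩)
      · rintro ⟨hwx', hw⟩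
        have key : ∀ y ∈ C ∪ C', ¬ w ∈ subtreeAt ρ y := by
          intro y hy hyw
          have hyw' : treeLE ρ y w := hyw
          have hwx'' : treeLE ρ x' w := hwx'
          rcases treeLE_total hT1 hyw' hwx'' with h | h
          · exact hbad y hy h
          · have hyS : y ∈ S := Finset.mem_filter.mpr ⟨hy, h⟩
            obtain ⟨m, hmS, hmy, hmin⟩ := exists_min ρ S hyS
            have hmC₀ : m ∈ C₀ := Finset.mem_filter.mpr ⟨hmS, hmin⟩
            exact hw (Set.mem_iUnion₂.mpr ⟨m, hmC₀, treeLE_trans hmy hyw'⟩)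
        refine ⟨⟨treeLE_trans hxx' hwx', ?_⟩, hwx', ?_⟩
        · intro hmem
          obtain ⟨y, hy, hyw⟩ := Set.mem_iUnion₂.mp hmem
          exact key y (Finset.mem_union_left _ hy) hyw
        · intro hmem
          obtain ⟨y, hy, hyw⟩ := Set.mem_iUnion₂.mp hmem
          exact key y (Finset.mem_union_right _ hy) hyw

lemma inter_mem (hT1 : ∀ a b : T, ∃! φ : Set.Icc (0:ℝ) (dist a b) → T, IsSegmentMap a b φ)
    (ρ : T) {A B : Set T} (hA : A ∈ preBalls ρ) (hB : B ∈ preBalls ρ) :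
    A ∩ B ∈ preBalls ρ := by
  obtain ⟨x, C, hC1, hC2, rfl⟩ := hA
  obtain ⟨x', C', hC'1, hC'2, rfl⟩ := hB
  by_cases h1 : treeLE ρ x x'
  · exact inter_aux hT1 ρ x x' C C' h1
  by_cases h2 : treeLE ρ x' x
  · rw [Set.inter_comm]
    exact inter_aux hT1 ρ x' x C' C h2
  · have hempty : (subtreeAt ρ x \ ⋃ y ∈ C, subtreeAt ρ y) ∩
        (subtreeAt ρ x' \ ⋃ y ∈ C', subtreeAt ρ y) = (∅ : Set T) := by
      ext w
      simp only [Set.mem_inter_iff, Set.mem_diff, Set.mem_empty_iff_false, iff_false]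
      rintro ⟨⟨hwx, -⟩, hwx', -⟩
      have hwx2 : treeLE ρ x w := hwx
      have hwx'2 : treeLE ρ x' w := hwx'
      rcases treeLE_total hT1 hwx2 hwx'2 with h | h
      · exact h1 h
      · exact h2 h
    rw [hempty]; exact empty_mem ρ

end Balls

section Diff
variable {T : Type*} [MetricSpace T]

lemma diff_subtree_mem (hT1 : ∀ a b : T, ∃! φ : Set.Icc (0:ℝ) (dist a b) → T, IsSegmentMap a b φ)
    (ρ x x' : T) (C : Finset T)
    (hC1 : ∀ y ∈ C, treeLE ρ x y)
    (hC2 : ∀ y ∈ C, ∀ z ∈ C, y ≠ z → ¬ treeLE ρ y z) :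
    (subtreeAt ρ x \ ⋃ y ∈ C, subtreeAt ρ y) \ subtreeAt ρ x' ∈ preBalls ρ := by
  classical
  by_cases h1 : treeLE ρ x x'
  · set D : Finset T := insert x' C with hD
    set C₁ : Finset T := D.filter (fun m => ∀ z ∈ D, treeLE ρ z m → z = m) with hC₁
    have hD1 : ∀ y ∈ D, treeLE ρ x y := by
      intro y hy
      rcases Finset.mem_insert.mp hy with rfl | hy
      · exact h1
      · exact hC1 y hy
    refine ⟨x, C₁, ?_, ?_, ?_⟩
    · intro m hm
      exact hD1 m (Finset.mem_filter.mp hm).1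
    · intro m hm m' hm' hne hle
      exact hne ((Finset.mem_filter.mp hm').2 m (Finset.mem_filter.mp hm).1 hle)
    · ext w
      simp only [Set.mem_diff]
      constructor
      · rintro ⟨⟨hwx, hwC⟩, hwx'⟩
        refine ⟨hwx, ?_⟩
        intro hmem
        obtain ⟨m, hm, hmw⟩ := Set.mem_iUnion₂.mp hmem
        have hmD := (Finset.mem_filter.mp hm).1
        rcases Finset.mem_insert.mp hmD with rfl | h
        · exact hwx' hmw
        · exact hwC (Set.mem_iUnion₂.mpr ⟨m, h, hmw⟩)
      · rintro ⟨hwx, hw⟩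
        have key : ∀ y ∈ D, ¬ w ∈ subtreeAt ρ y := by
          intro y hy hyw
          obtain ⟨m, hmD, hmy, hmin⟩ := exists_min ρ D hy
          have hmC₁ : m ∈ C₁ := Finset.mem_filter.mpr ⟨hmD, hmin⟩
          exact hw (Set.mem_iUnion₂.mpr ⟨m, hmC₁, treeLE_trans hmy hyw⟩)
        refine ⟨⟨hwx, ?_⟩, key x' (Finset.mem_insert_self _ _)⟩
        intro hmem
        obtain ⟨y, hy, hyw⟩ := Set.mem_iUnion₂.mp hmem
        exact key y (Finset.mem_insert_of_mem hy) hyw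
  by_cases h2 : treeLE ρ x' x
  · have hempty : (subtreeAt ρ x \ ⋃ y ∈ C, subtreeAt ρ y) \ subtreeAt ρ x' = (∅ : Set T) := by
      ext w
      simp only [Set.mem_diff, Set.mem_empty_iff_false, iff_false]
      rintro ⟨⟨hwx, -⟩, hwx'⟩
      exact hwx' (treeLE_trans h2 hwx)
    rw [hempty]; exact empty_mem ρ
  · refine ⟨x, C, hC1, hC2, ?_⟩
    ext w
    simp only [Set.mem_diff]
    constructor
    · rintro ⟨hw, -⟩
      exact hw
    · rintro ⟨hwx, hwC⟩
      refine ⟨⟨hwx, hwC⟩, ?_⟩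
      intro hwx'
      have hwx2 : treeLE ρ x w := hwx
      have hwx'2 : treeLE ρ x' w := hwx'
      rcases treeLE_total hT1 hwx2 hwx'2 with h | h
      · exact h1 h
      · exact h2 h

end Diff


/-- In a compact rooted `ℝ`-tree, the pre-balls form a semi-ring of sets:
the collection contains `∅`, is closed under pairwise intersection, and the
difference of two pre-balls is a finite disjoint union of pre-balls. -/
theorem stmt13 (T : Type*) [MetricSpace T] [CompactSpace T]
    (hT : IsRTree T) (ρ : T) :
    ∅ ∈ preBalls ρ ∧
    (∀ A ∈ preBalls ρ, ∀ B ∈ preBalls ρ, A ∩ B ∈ preBalls ρ) ∧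
    (∀ A ∈ preBalls ρ, ∀ B ∈ preBalls ρ, ∃ F : Finset (Set T),
      (↑F : Set (Set T)) ⊆ preBalls ρ ∧
      ((F : Set (Set T)).Pairwise fun U V => Disjoint U V) ∧
      A \ B = ⋃₀ ↑F) := by
  classical
  have hT1 := hT.1
  refine ⟨empty_mem ρ, fun A hA B hB => inter_mem hT1 ρ hA hB, ?_⟩
  intro A hA B hB
  obtain ⟨x, C, hC1, hC2, rfl⟩ := hA
  obtain ⟨x', C', hC'1, hC'2, rfl⟩ := hB
  set AA : Set T := subtreeAt ρ x \ ⋃ y ∈ C, subtreeAt ρ y with hAA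
  have hAmem : AA ∈ preBalls ρ := ⟨x, C, hC1, hC2, rfl⟩
  refine ⟨insert (AA \ subtreeAt ρ x') (C'.image fun y => AA ∩ subtreeAt ρ y), ?_, ?_, ?_⟩
  · intro U hU
    rw [Finset.mem_coe, Finset.mem_insert] at hU
    rcases hU with rfl | hU
    · exact diff_subtree_mem hT1 ρ x x' C hC1 hC2
    · obtain ⟨y, hy, rfl⟩ := Finset.mem_image.mp hU
      exact inter_mem hT1 ρ hAmem (subtree_mem ρ y)
  · intro U hU V hV hne
    rw [Finset.mem_coe, Finset.mem_insert] at hU hV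
    have hdisj1 : ∀ y ∈ C', Disjoint (AA \ subtreeAt ρ x') (AA ∩ subtreeAt ρ y) := by
      intro y hy
      rw [Set.disjoint_left]
      rintro w ⟨-, hwx'⟩ ⟨-, hwy⟩
      exact hwx' (treeLE_trans (hC'1 y hy) hwy)
    rcases hU with rfl | hU <;> rcases hV with rfl | hV
    · exact absurd rfl hne
    · obtain ⟨y, hy, rfl⟩ := Finset.mem_image.mp hV
      exact hdisj1 y hy
    · obtain ⟨y, hy, rfl⟩ := Finset.mem_image.mp hU
      exact (hdisj1 y hy).symm
    · obtain ⟨y, hy, rfl⟩ := Finset.mem_image.mp hU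
      obtain ⟨z, hz, rfl⟩ := Finset.mem_image.mp hV
      have hyz : y ≠ z := by
        rintro rfl
        exact hne rfl
      rw [Set.disjoint_left]
      rintro w ⟨-, hwy⟩ ⟨-, hwz⟩
      have hwy2 : treeLE ρ y w := hwy
      have hwz2 : treeLE ρ z w := hwz
      rcases treeLE_total hT1 hwy2 hwz2 with h | h
      · exact hC'2 y hy z hz hyz h
      · exact hC'2 z hz y hy hyz.symm h
  · rw [Finset.coe_insert, Set.sUnion_insert, Finset.coe_image, Set.sUnion_image]
    ext w
    simp only [Set.mem_diff, Set.mem_union, Set.mem_iUnion, exists_prop, Set.mem_inter_iff]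
    constructor
    · rintro ⟨hwA, hwB⟩
      by_cases hwx' : w ∈ subtreeAt ρ x'
      · right
        by_contra hcon
        push_neg at hcon
        apply hwB
        refine ⟨hwx', ?_⟩
        intro hmem
        obtain ⟨y, hy, hyw⟩ := hmem
        exact hcon y hy hwA hyw
      · exact Or.inl ⟨hwA, hwx'⟩
    · rintro (⟨hwA, hwx'⟩ | ⟨y, hy, hwA, hwy⟩)
      · exact ⟨hwA, fun hwB => hwx' hwB.1⟩
      · refine ⟨hwA, ?_⟩
        rintro ⟨-, hnB⟩
        exact hnB ⟨y, hy, hwy⟩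
end

section
/- The map from $\ell^1$ (summable real sequences) to compact subsets of $\ell^1$ defined by $x \mapsto \llbracket 0, x\rrbracket := \bigcup_{n=0}^{\infty} [p_n(x), p_{n+1}(x)]$, where $p_n$ is the projection setting all coordinates after the first $n$ to zero and $[a,b]$ denotes the line segment between $a$ and $b$, is 1-Lipschitz for the Hausdorff distance: $d_H(\llbracket 0,x\rrbracket, \llbracket 0,y\rrbracket) \le \|x - y\|_1$. -/
open Metric

instance : Fact ((1 : ENNReal) ≤ 1) := ⟨le_rfl⟩

/-- The space `ℓ¹` of summable real sequences. -/
abbrev Ell1 : Type := lp (fun _ : ℕ => ℝ) 1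

/-- The projection `p_n` keeping the first `n` coordinates and setting the
others to `0`. -/
noncomputable def projN (n : ℕ) (x : Ell1) : Ell1 :=
  ∑ i ∈ Finset.range n, lp.single 1 i (x i)

/-- The stick-breaking path `⟦0, x⟧ = ⋃ₙ [pₙ(x), pₙ₊₁(x)]`. -/
noncomputable def stick (x : Ell1) : Set Ell1 :=
  ⋃ n : ℕ, segment ℝ (projN n x) (projN (n + 1) x)

lemma hasSum_norm1 (f : Ell1) : HasSum (fun i => ‖f i‖) ‖f‖ := by
  have := lp.hasSum_norm (p := 1) (by norm_num) f
  simpa using this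

lemma norm_sum_single1 (f : ℕ → ℝ) (s : Finset ℕ) :
    ‖∑ i ∈ s, lp.single (E := fun _ : ℕ => ℝ) 1 i (f i)‖ = ∑ i ∈ s, ‖f i‖ := by
  have := lp.norm_sum_single (E := fun _ : ℕ => ℝ) (p := 1) (by norm_num) f s
  simpa using this

lemma norm_projN_le (n : ℕ) (x : Ell1) : ‖projN n x‖ ≤ ‖x‖ := by
  rw [projN, norm_sum_single1]
  exact sum_le_hasSum _ (fun i _ => norm_nonneg _) (hasSum_norm1 x)

lemma projN_sub (n : ℕ) (x y : Ell1) : projN n x - projN n y = projN n (x - y) := by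
  simp only [projN, ← Finset.sum_sub_distrib]
  refine Finset.sum_congr rfl fun i _ => ?_
  ext j
  rcases eq_or_ne j i with rfl | h
  · simp [lp.single_apply_self]
  · simp [lp.single_apply_ne _ _ _ h]

lemma norm_projN_sub_le (n : ℕ) (x y : Ell1) : ‖projN n x - projN n y‖ ≤ ‖x - y‖ := by
  rw [projN_sub]; exact norm_projN_le n (x - y)

lemma projN_sub_projN (x : Ell1) {n m : ℕ} (h : n ≤ m) :
    projN m x - projN n x = ∑ i ∈ Finset.Ico n m, lp.single 1 i (x i) := by
  rw [projN, projN, ← Finset.sum_range_add_sum_Ico _ h]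
  abel

lemma norm_projN_sub_projN (x : Ell1) {n m : ℕ} (h : n ≤ m) :
    ‖projN m x - projN n x‖ = ∑ i ∈ Finset.Ico n m, ‖x i‖ := by
  rw [projN_sub_projN x h, norm_sum_single1]

lemma stick_mem_dist (x y : Ell1) :
    ∀ z ∈ stick x, ∃ w ∈ stick y, dist z w ≤ ‖x - y‖ := by
  intro z hz
  obtain ⟨n, hn⟩ := Set.mem_iUnion.1 hz
  obtain ⟨a, b, ha, hb, hab, rfl⟩ := hn
  refine ⟨a • projN n y + b • projN (n + 1) y, Set.mem_iUnion.2 ⟨n, a, b, ha, hb, hab, rfl⟩, ?_⟩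
  rw [dist_eq_norm]
  have : a • projN n x + b • projN (n + 1) x - (a • projN n y + b • projN (n + 1) y)
      = a • (projN n x - projN n y) + b • (projN (n + 1) x - projN (n + 1) y) := by
    module
  rw [this]
  calc ‖a • (projN n x - projN n y) + b • (projN (n + 1) x - projN (n + 1) y)‖
      ≤ ‖a • (projN n x - projN n y)‖ + ‖b • (projN (n + 1) x - projN (n + 1) y)‖ :=
        norm_add_le _ _
    _ ≤ a * ‖x - y‖ + b * ‖x - y‖ := by
        rw [norm_smul, norm_smul, Real.norm_of_nonneg ha, Real.norm_of_nonneg hb]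
        gcongr
        exacts [norm_projN_sub_le _ _ _, norm_projN_sub_le _ _ _]
    _ = ‖x - y‖ := by rw [← add_mul, hab, one_mul]

lemma isCompact_segment {a b : Ell1} : IsCompact (segment ℝ a b) := by
  rw [segment_eq_image]
  exact isCompact_Icc.image (by fun_prop)

/-- The stick-breaking map `x ↦ ⟦0, x⟧` takes values in (pre)compact subsets of
`ℓ¹` and is 1-Lipschitz for the Hausdorff distance:
`d_H(⟦0,x⟧, ⟦0,y⟧) ≤ ‖x - y‖₁`. -/
theorem stmt17 :
    (∀ x : Ell1, IsCompact (closure (stick x))) ∧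
    ∀ x y : Ell1, hausdorffDist (stick x) (stick y) ≤ ‖x - y‖ := by
  constructor
  · intro x
    refine TotallyBounded.isCompact_of_isClosed ?_ isClosed_closure
    refine TotallyBounded.closure ?_
    rw [totallyBounded_iff]
    intro ε hε
    -- Get N with tail sums < ε
    have hsum : HasSum (fun i => ‖x i‖) ‖x‖ := hasSum_norm1 x
    have htend := hsum.tendsto_sum_nat
    obtain ⟨N, hN⟩ := (Metric.tendsto_atTop.1 htend) (ε / 2) (by linarith)
    have tail : ∀ m, N ≤ m → ‖projN m x - projN N x‖ < ε := by
      intro m hm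
      rw [norm_projN_sub_projN x hm]
      have h1 := hN N le_rfl
      have h2 := hN m hm
      have : ∑ i ∈ Finset.Ico N m, ‖x i‖
          = ∑ i ∈ Finset.range m, ‖x i‖ - ∑ i ∈ Finset.range N, ‖x i‖ := by
        rw [← Finset.sum_range_add_sum_Ico _ hm]; ring
      rw [this]
      rw [Real.dist_eq] at h1 h2
      have h1' := abs_lt.1 h1
      have h2' := abs_lt.1 h2
      linarith [h1'.1, h1'.2, h2'.1, h2'.2]
    -- compact initial part
    have hK : IsCompact (⋃ n ∈ Finset.range N, segment ℝ (projN n x) (projN (n + 1) x)) :=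
      (Finset.range N).isCompact_biUnion (fun n _ => isCompact_segment)
    obtain ⟨t, htfin, htcover⟩ := totallyBounded_iff.1 hK.totallyBounded ε hε
    refine ⟨t ∪ {projN N x}, htfin.union (Set.finite_singleton _), ?_⟩
    intro z hz
    obtain ⟨n, hn⟩ := Set.mem_iUnion.1 hz
    rcases lt_or_ge n N with hnN | hNn
    · have : z ∈ ⋃ n ∈ Finset.range N, segment ℝ (projN n x) (projN (n + 1) x) :=
        Set.mem_biUnion (Finset.mem_range.2 hnN) hn
      obtain ⟨y, hy, hzy⟩ := Set.mem_iUnion₂.1 (htcover this)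
      exact Set.mem_biUnion (Set.mem_union_left _ hy) hzy
    · refine Set.mem_biUnion (Set.mem_union_right _ rfl) ?_
      obtain ⟨a, b, ha, hb, hab, rfl⟩ := hn
      rw [mem_ball, dist_eq_norm]
      have heq : a • projN n x + b • projN (n + 1) x - projN N x
          = a • (projN n x - projN N x) + b • (projN (n + 1) x - projN N x) := by
        have h1 : projN N x = (a + b) • projN N x := by rw [hab, one_smul]
        calc a • projN n x + b • projN (n + 1) x - projN N x
            = a • projN n x + b • projN (n + 1) x - (a + b) • projN N x := by rw [← h1]
          _ = a • (projN n x - projN N x) + b • (projN (n + 1) x - projN N x) := by module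
      rw [heq]
      calc ‖a • (projN n x - projN N x) + b • (projN (n + 1) x - projN N x)‖
          ≤ a * ‖projN n x - projN N x‖ + b * ‖projN (n + 1) x - projN N x‖ := by
            refine (norm_add_le _ _).trans ?_
            rw [norm_smul, norm_smul, Real.norm_of_nonneg ha, Real.norm_of_nonneg hb]
        _ < ε := by
            rcases eq_or_lt_of_le ha with rfl0 | ha'
            · have hb1 : b = 1 := by linarith
              simpa [← rfl0, hb1] using tail (n + 1) (by omega)
            rcases eq_or_lt_of_le hb with rfl0 | hb'
            · have ha1 : a = 1 := by linarith
              simpa [← rfl0, ha1] using tail n hNn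
            have t1 := tail n hNn
            have t2 := tail (n + 1) (by omega)
            nlinarith
  · intro x y
    exact hausdorffDist_le_of_mem_dist (norm_nonneg _) (stick_mem_dist x y)
      (by simpa [norm_sub_rev] using stick_mem_dist y x)
end
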